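/- arXiv:1105.5774 — 2 statements merged into one kernel-verified Lean document; each statement's English description precedes it below -/
import Mathlib

section
/- Let ε < 0 and s₀ be real numbers, and define γ(x) = (x + s₀)·((x + s₀)³ + ε²)^(−1/3) on the open set of real x where (x + s₀)³ + ε² > 0. Then for every such x, γ satisfies the equation 1 − 2·γ(x)³ + γ(x)⁶ + ε·(γ′(x))^(3/2) = 0, where γ′ is the derivative of γ (note γ′(x) = ε²·((x+s₀)³+ε²)^(−4/3) ≥ 0, so the 3/2-power is the real power of a nonnegative real). -/
/-- γ(x) = (x+s₀)·((x+s₀)³+ε²)^(−1/3) solves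
    1 − 2γ³ + γ⁶ + ε·(γ′)^{3/2} = 0 wherever (x+s₀)³+ε² > 0. -/
theorem gamma_solves_ode (ε s₀ : ℝ) (hε : ε < 0)
    (γ : ℝ → ℝ)
    (hγ : ∀ x : ℝ, γ x = (x + s₀) * ((x + s₀) ^ 3 + ε ^ 2) ^ (-(1 / 3) : ℝ)) :
    ∀ x : ℝ, (x + s₀) ^ 3 + ε ^ 2 > 0 →
      1 - 2 * (γ x) ^ 3 + (γ x) ^ 6 + ε * (deriv γ x) ^ ((3 : ℝ) / 2) = 0 := by
  have hγeq : γ = fun x : ℝ => (x + s₀) * ((x + s₀) ^ 3 + ε ^ 2) ^ (-(1 / 3) : ℝ) :=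
    funext hγ
  intro x hx
  set u : ℝ := x + s₀ with hu
  set A : ℝ := u ^ 3 + ε ^ 2 with hA
  have hAne : A ≠ 0 := ne_of_gt hx
  -- derivative of inner function
  have hg : HasDerivAt (fun x : ℝ => (x + s₀) ^ 3 + ε ^ 2) (3 * u ^ 2) x := by
    have h1 : HasDerivAt (fun x : ℝ => x + s₀) 1 x := (hasDerivAt_id x).add_const s₀
    have := (h1.pow 3).add_const (ε ^ 2)
    simpa [hu] using this
  have hr : HasDerivAt (fun x : ℝ => ((x + s₀) ^ 3 + ε ^ 2) ^ (-(1 / 3) : ℝ))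
      ((-(1 / 3) : ℝ) * A ^ ((-(1 / 3) : ℝ) - 1) * (3 * u ^ 2)) x := by
    have := (Real.hasDerivAt_rpow_const (x := A) (p := (-(1 / 3) : ℝ)) (Or.inl hAne)).comp x hg
    exact this
  have h1 : HasDerivAt (fun x : ℝ => x + s₀) 1 x := (hasDerivAt_id x).add_const s₀
  have hf : HasDerivAt γ
      (1 * A ^ (-(1 / 3) : ℝ) + u * ((-(1 / 3) : ℝ) * A ^ ((-(1 / 3) : ℝ) - 1) * (3 * u ^ 2))) x := by
    rw [hγeq]
    exact h1.mul hr
  have hderiv : deriv γ x = ε ^ 2 * A ^ (-(4 / 3) : ℝ) := by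
    rw [hf.deriv]
    have hstep : A ^ (-(1 / 3) : ℝ) = A * A ^ (-(4 / 3) : ℝ) := by
      rw [show A * A ^ (-(4/3):ℝ) = A ^ (1:ℝ) * A ^ (-(4/3):ℝ) by rw [Real.rpow_one],
        ← Real.rpow_add hx]
      norm_num
    have hexp : ((-(1 / 3) : ℝ) - 1) = (-(4 / 3) : ℝ) := by norm_num
    rw [hexp, hstep]
    ring
  -- powers of γ
  have hγ3 : (γ x) ^ 3 = u ^ 3 / A := by
    rw [hγ x, mul_pow, ← Real.rpow_natCast (A ^ (-(1/3):ℝ)) 3, ← Real.rpow_mul hx.le]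
    norm_num
    rw [Real.rpow_neg_one]
    ring
  have hγ6 : (γ x) ^ 6 = u ^ 6 / A ^ 2 := by
    rw [hγ x, mul_pow, ← Real.rpow_natCast (A ^ (-(1/3):ℝ)) 6, ← Real.rpow_mul hx.le]
    norm_num
    rw [hu]
    ring
  -- the 3/2 power of the derivative
  have hεpos : (0:ℝ) < -ε := by linarith
  have hpow : (deriv γ x) ^ ((3:ℝ)/2) = (-ε) ^ 3 / A ^ 2 := by
    rw [hderiv]
    rw [Real.mul_rpow (sq_nonneg ε) (Real.rpow_nonneg hx.le _)]
    have h1 : (ε ^ 2) ^ ((3:ℝ)/2) = (-ε) ^ 3 := by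
      have : ε ^ 2 = (-ε) ^ 2 := by ring
      rw [this, ← Real.rpow_natCast (-ε) 2, ← Real.rpow_mul hεpos.le]
      norm_num
    have h2 : (A ^ (-(4/3):ℝ)) ^ ((3:ℝ)/2) = (A ^ 2)⁻¹ := by
      rw [← Real.rpow_mul hx.le]
      norm_num
    rw [h1, h2]
    ring
  rw [hγ3, hγ6, hpow]
  field_simp
  ring
end

section
/- Fix a real parameter ε < 0 and a real x > 0. Then the limit as z → 0 (z ≠ 0) of χ₀(x,z) − 1/z exists and equals 28/x³ − (ε²x³ + x⁶)/5832. -/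
/-- κ(x,z) = (ε² + x³)z³ − x³ -/
noncomputable def kappa (ε x z : ℝ) : ℝ := (ε ^ 2 + x ^ 3) * z ^ 3 - x ^ 3

/-- w(z) = √(1 − 2z³ − (ε⁴/3888)z⁴ + z⁶) -/
noncomputable def wfun (ε z : ℝ) : ℝ :=
  Real.sqrt (1 - 2 * z ^ 3 - (ε ^ 4 / 3888) * z ^ 4 + z ^ 6)

/-- χ₀(x,z) from Corollary 2.3. -/
noncomputable def chi0 (ε x z : ℝ) : ℝ :=
  1 / (2 * z) - x ^ 3 * (ε ^ 2 + x ^ 3) / 5832 + 10 * (z ^ 3 - 1) / kappa ε x z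
    + ε ^ 2 * x ^ 3 * z / (216 * kappa ε x z)
    - (108 * wfun ε z + ε ^ 2 * z ^ 2) / (6 * kappa ε x z)
    - x ^ 3 * wfun ε z / (2 * kappa ε x z * z)
    + 16 * ε ^ 2 * z ^ 3 / (kappa ε x z * x ^ 3)

open Filter Topology

/-- χ₀(x,z) − 1/z → 28/x³ − (ε²x³ + x⁶)/5832 as z → 0, z ≠ 0. -/
theorem chi0_constant_term (ε x : ℝ) (hε : ε < 0) (hx : 0 < x) :
    Filter.Tendsto (fun z : ℝ => chi0 ε x z - 1 / z)
      (nhdsWithin 0 {z : ℝ | z ≠ 0})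
      (nhds (28 / x ^ 3 - (ε ^ 2 * x ^ 3 + x ^ 6) / 5832)) := by
  have hx3 : (0:ℝ) < x ^ 3 := by positivity
  set F : ℝ → ℝ := fun z =>
    -(((ε ^ 2 + x ^ 3) * z ^ 2
        + x ^ 3 * z ^ 2 * (-2 - (ε ^ 4 / 3888) * z + z ^ 3) / (wfun ε z + 1))
      / (2 * kappa ε x z))
    - x ^ 3 * (ε ^ 2 + x ^ 3) / 5832 + 10 * (z ^ 3 - 1) / kappa ε x z
    + ε ^ 2 * x ^ 3 * z / (216 * kappa ε x z)
    - (108 * wfun ε z + ε ^ 2 * z ^ 2) / (6 * kappa ε x z)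
    + 16 * ε ^ 2 * z ^ 3 / (kappa ε x z * x ^ 3) with hFdef
  have hwc : Continuous (wfun ε) := by
    unfold wfun
    exact (by continuity : Continuous fun z : ℝ => 1 - 2 * z ^ 3 - (ε ^ 4 / 3888) * z ^ 4 + z ^ 6).sqrt
  have hkc : Continuous (kappa ε x) := by unfold kappa; continuity
  have hrc : Continuous fun z : ℝ => 1 - 2 * z ^ 3 - (ε ^ 4 / 3888) * z ^ 4 + z ^ 6 := by continuity
  -- eventual conditions
  have hr : ∀ᶠ z in 𝓝 (0:ℝ), 0 < 1 - 2 * z ^ 3 - (ε ^ 4 / 3888) * z ^ 4 + z ^ 6 := by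
    have : IsOpen {z : ℝ | 0 < 1 - 2 * z ^ 3 - (ε ^ 4 / 3888) * z ^ 4 + z ^ 6} :=
      isOpen_lt continuous_const hrc
    exact this.mem_nhds (by norm_num)
  have hk : ∀ᶠ z in 𝓝 (0:ℝ), kappa ε x z < 0 := by
    have : IsOpen {z : ℝ | kappa ε x z < 0} := isOpen_lt hkc continuous_const
    refine this.mem_nhds ?_
    simp [kappa]
    linarith
  have heq : (fun z : ℝ => chi0 ε x z - 1 / z) =ᶠ[nhdsWithin (0:ℝ) {z : ℝ | z ≠ 0}] F := by
    filter_upwards [nhdsWithin_le_nhds hr, nhdsWithin_le_nhds hk, self_mem_nhdsWithin]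
      with z hrz hkz hz0
    have hz0 : z ≠ 0 := hz0
    have hkz' : kappa ε x z ≠ 0 := ne_of_lt hkz
    have hwnn : 0 ≤ wfun ε z := Real.sqrt_nonneg _
    have hw1 : wfun ε z + 1 ≠ 0 := by positivity
    have hw2 : wfun ε z ^ 2 = 1 - 2 * z ^ 3 - (ε ^ 4 / 3888) * z ^ 4 + z ^ 6 :=
      Real.sq_sqrt hrz.le
    have hkap : kappa ε x z = (ε ^ 2 + x ^ 3) * z ^ 3 - x ^ 3 := rfl
    have hS : 1 / (2 * z) - 1 / z - x ^ 3 * wfun ε z / (2 * kappa ε x z * z)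
        = -(((ε ^ 2 + x ^ 3) * z ^ 2
            + x ^ 3 * z ^ 2 * (-2 - (ε ^ 4 / 3888) * z + z ^ 3) / (wfun ε z + 1))
          / (2 * kappa ε x z)) := by
      rw [hkap] at hkz' ⊢
      have hk3 : z ^ 3 * (ε ^ 2 + x ^ 3) - x ^ 3 ≠ 0 := by
        intro h; apply hkz'; linear_combination h
      field_simp
      linear_combination (-3888 * x ^ 3) * hw2
    simp only [hFdef, chi0]
    linear_combination hS
  -- limit of F
  have hk0 : kappa ε x 0 = -x ^ 3 := by simp [kappa]
  have hw0 : wfun ε 0 = 1 := by simp [wfun]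
  have hFc : ContinuousAt F 0 := by
    have h1 : wfun ε 0 + 1 ≠ 0 := by rw [hw0]; norm_num
    have h2 : kappa ε x 0 ≠ 0 := by rw [hk0]; exact neg_ne_zero.mpr (by positivity)
    fun_prop (disch := first | exact h1 | exact h2 |
      (simp [hk0, hw0]; positivity) | positivity)
  have hF0 : F 0 = 28 / x ^ 3 - (ε ^ 2 * x ^ 3 + x ^ 6) / 5832 := by
    simp only [hFdef, hk0, hw0]
    field_simp
    ring
  rw [← hF0]
  exact Filter.Tendsto.congr' heq.symm (hFc.continuousWithinAt.tendsto)
end
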